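/- In a residuated lattice, the join ⋎ of any family of pure filters is pure, and the intersection of two pure filters is pure; hence the pure filters form a frame (complete lattice satisfying the join-infinite distributive law) under ∩ and ⋎. -/

import Mathlib

structure ResiduatedLattice (A : Type*) [Lattice A] [BoundedOrder A] where
  mul : A → A → A
  himp : A → A → A
  mul_comm : ∀ x y : A, mul x y = mul y x
  mul_assoc : ∀ x y z : A, mul (mul x y) z = mul x (mul y z)
  mul_top : ∀ x : A, mul x ⊤ = x
  adj : ∀ x y z : A, mul x z ≤ y ↔ z ≤ himp x y

namespace ResiduatedLattice

variable {A : Type*} [Lattice A] [BoundedOrder A]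

/-- ¬a := a → 0 -/
def neg (R : ResiduatedLattice A) (a : A) : A := R.himp a ⊥

/-- A filter: nonempty, closed under ⊙, and closed under joining with arbitrary elements. -/
def IsFilter (R : ResiduatedLattice A) (F : Set A) : Prop :=
  F.Nonempty ∧ (∀ x ∈ F, ∀ y ∈ F, R.mul x y ∈ F) ∧ (∀ x ∈ F, ∀ y : A, x ⊔ y ∈ F)

/-- Join of two filters: the filter generated by their union. -/
def FJoin (R : ResiduatedLattice A) (F G : Set A) : Set A :=
  {c | ∃ f ∈ F, ∃ g ∈ G, R.mul f g ≤ c}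

/-- Coannulet a⊥ = {x | x ∨ a = 1}. -/
def perp (R : ResiduatedLattice A) (a : A) : Set A := {x | x ⊔ a = ⊤}

/-- Powers aⁿ with a⁰ = 1 = ⊤. -/
def pow (R : ResiduatedLattice A) (a : A) : ℕ → A
  | 0 => ⊤
  | n + 1 => R.mul a (pow R a n)

/-- Filter generated by a filter F together with an element x. -/
def FGen (R : ResiduatedLattice A) (F : Set A) (x : A) : Set A :=
  {a | ∃ f ∈ F, ∃ n : ℕ, R.mul f (R.pow x n) ≤ a}

/-- Principal filter generated by a. -/
def principal (R : ResiduatedLattice A) (a : A) : Set A :=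
  {b | ∃ n : ℕ, R.pow a n ≤ b}

/-- The sink σ(F) = {a | a⊥ ⋎ F = A}. -/
def sink (R : ResiduatedLattice A) (F : Set A) : Set A :=
  {a | R.FJoin (R.perp a) F = Set.univ}

/-- Purity condition: a⊥ ⋎ F = A for every a ∈ F. -/
def PureOn (R : ResiduatedLattice A) (F : Set A) : Prop :=
  ∀ a ∈ F, R.FJoin (R.perp a) F = Set.univ

/-- Prime filter. -/
def IsPrime (R : ResiduatedLattice A) (F : Set A) : Prop :=
  R.IsFilter F ∧ F ≠ Set.univ ∧ ∀ x y : A, x ⊔ y ∈ F → x ∈ F ∨ y ∈ F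

/-- Minimal prime filter. -/
def IsMinimalPrime (R : ResiduatedLattice A) (F : Set A) : Prop :=
  R.IsPrime F ∧ ∀ G : Set A, R.IsPrime G → G ⊆ F → G = F

/-- Filter generated by an arbitrary set X. -/
def gen (R : ResiduatedLattice A) (X : Set A) : Set A :=
  {a | ∃ l : List A, (∀ x ∈ l, x ∈ X) ∧ l.foldr R.mul ⊤ ≤ a}

/-- Purely-prime filter: proper pure filter p such that F₁ ∩ F₂ = p for pure filters
implies F₁ = p or F₂ = p. -/
def PurelyPrime (R : ResiduatedLattice A) (p : Set A) : Prop :=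
  R.IsFilter p ∧ R.PureOn p ∧ p ≠ Set.univ ∧
    ∀ F₁ F₂ : Set A, R.IsFilter F₁ → R.PureOn F₁ → R.IsFilter F₂ → R.PureOn F₂ →
      F₁ ∩ F₂ = p → F₁ = p ∨ F₂ = p

/-- (H : a) = {x | x ∨ a ∈ H}. -/
def res (R : ResiduatedLattice A) (H : Set A) (a : A) : Set A :=
  {x | x ⊔ a ∈ H}

end ResiduatedLattice

open ResiduatedLattice

variable {A : Type*} [Lattice A] [BoundedOrder A]

namespace Aux

variable (R : ResiduatedLattice A)

lemma mul_mono_right {y z : A} (x : A) (h : y ≤ z) : R.mul x y ≤ R.mul x z :=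
  (R.adj x (R.mul x z) y).mpr (le_trans h ((R.adj x (R.mul x z) z).mp le_rfl))

lemma mul_mono_left {y z : A} (x : A) (h : y ≤ z) : R.mul y x ≤ R.mul z x := by
  rw [R.mul_comm y x, R.mul_comm z x]; exact mul_mono_right R x h

lemma top_mul (x : A) : R.mul ⊤ x = x := by rw [R.mul_comm]; exact R.mul_top x

lemma mul_le_left (x y : A) : R.mul x y ≤ x := by
  calc R.mul x y ≤ R.mul x ⊤ := mul_mono_right R x le_top
  _ = x := R.mul_top x

lemma mul_le_right (x y : A) : R.mul x y ≤ y := by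
  rw [R.mul_comm]; exact mul_le_left R y x

lemma mul_sup (x y z : A) : R.mul x (y ⊔ z) = R.mul x y ⊔ R.mul x z := by
  apply le_antisymm
  · rw [R.adj]
    apply sup_le
    · rw [← R.adj]; exact le_sup_left
    · rw [← R.adj]; exact le_sup_right
  · exact sup_le (mul_mono_right R x le_sup_left) (mul_mono_right R x le_sup_right)

lemma sup_mul_sup (a x y : A) : R.mul (a ⊔ x) (a ⊔ y) ≤ a ⊔ R.mul x y := by
  rw [mul_sup]
  apply sup_le
  · exact le_trans (mul_le_right R _ _) le_sup_left
  · rw [R.mul_comm, mul_sup]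
    apply sup_le
    · exact le_trans (mul_le_right R _ _) le_sup_left
    · rw [R.mul_comm]; exact le_sup_right

lemma perp_mul {a x y : A} (hx : x ∈ R.perp a) (hy : y ∈ R.perp a) :
    R.mul x y ∈ R.perp a := by
  have h : R.mul (a ⊔ x) (a ⊔ y) ≤ a ⊔ R.mul x y := sup_mul_sup R a x y
  have hx' : a ⊔ x = ⊤ := by rw [sup_comm]; exact hx
  have hy' : a ⊔ y = ⊤ := by rw [sup_comm]; exact hy
  rw [hx', hy', R.mul_top] at h
  have : a ⊔ R.mul x y = ⊤ := le_antisymm le_top h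
  show R.mul x y ⊔ a = ⊤
  rw [sup_comm]; exact this

lemma perp_inter {a b x : A} (hx : x ∈ R.perp a) (hy : x ∈ R.perp b) :
    x ∈ R.perp (R.mul a b) := by
  have h : R.mul (x ⊔ a) (x ⊔ b) ≤ x ⊔ R.mul a b := sup_mul_sup R x a b
  rw [hx, hy, R.mul_top] at h
  exact le_antisymm le_top h

lemma perp_mono {a b : A} (h : a ≤ b) : R.perp a ⊆ R.perp b := by
  intro x hx
  have : (⊤ : A) ≤ x ⊔ b := hx ▸ sup_le_sup_left h x
  exact le_antisymm le_top this

lemma filter_mem_of_le {F : Set A} (hF : R.IsFilter F) {a b : A} (ha : a ∈ F)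
    (hab : a ≤ b) : b ∈ F := by
  have := hF.2.2 a ha b
  rwa [sup_eq_right.mpr hab] at this

lemma filter_top_mem {F : Set A} (hF : R.IsFilter F) : ⊤ ∈ F := by
  obtain ⟨a, ha⟩ := hF.1
  exact filter_mem_of_le R hF ha le_top

lemma filter_foldr_mem {F : Set A} (hF : R.IsFilter F) {l : List A}
    (hl : ∀ x ∈ l, x ∈ F) : l.foldr R.mul ⊤ ∈ F := by
  induction l with
  | nil => exact filter_top_mem R hF
  | cons x l ih =>
      exact hF.2.1 x (hl x List.mem_cons_self) _
        (ih fun y hy => hl y (List.mem_cons_of_mem x hy))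

lemma gen_isFilter (X : Set A) : R.IsFilter (R.gen X) := by
  refine ⟨⟨⊤, [], fun x hx => absurd hx List.not_mem_nil, le_top⟩, ?_, ?_⟩
  · rintro a ⟨l₁, hl₁, h₁⟩ b ⟨l₂, hl₂, h₂⟩
    refine ⟨l₁ ++ l₂, ?_, ?_⟩
    · intro x hx
      rcases List.mem_append.mp hx with h | h
      · exact hl₁ x h
      · exact hl₂ x h
    · have key : ∀ (l m : List A),
          (l ++ m).foldr R.mul ⊤ = R.mul (l.foldr R.mul ⊤) (m.foldr R.mul ⊤) := by
        intro l m
        induction l with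
        | nil => simp [top_mul R]
        | cons x l ih => simp only [List.cons_append, List.foldr_cons, ih, R.mul_assoc]
      rw [key]
      exact le_trans (mul_mono_right R _ h₂) (mul_mono_left R _ h₁)
  · rintro a ⟨l, hl, h⟩ y
    exact ⟨l, hl, le_trans h le_sup_left⟩

lemma subset_gen (X : Set A) : X ⊆ R.gen X := by
  intro a ha
  refine ⟨[a], fun x hx => ?_, ?_⟩
  · rcases List.mem_singleton.mp hx with rfl; exact ha
  · simp only [List.foldr_cons, List.foldr_nil]
    rw [R.mul_top]

lemma gen_subset {X F : Set A} (hF : R.IsFilter F) (hXF : X ⊆ F) : R.gen X ⊆ F := by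
  rintro a ⟨l, hl, h⟩
  exact filter_mem_of_le R hF (filter_foldr_mem R hF fun x hx => hXF (hl x hx)) h

lemma gen_mono {X Y : Set A} (h : X ⊆ Y) : R.gen X ⊆ R.gen Y := by
  rintro a ⟨l, hl, hle⟩
  exact ⟨l, fun x hx => h (hl x hx), hle⟩

lemma sink_mono {H H' : Set A} (h : H ⊆ H') : R.sink H ⊆ R.sink H' := by
  intro a ha
  apply Set.eq_univ_of_univ_subset
  rw [← ha]
  rintro c ⟨u, hu, g, hg, hle⟩
  exact ⟨u, hu, g, h hg, hle⟩

lemma sink_isFilter {H : Set A} (hH : R.IsFilter H) : R.IsFilter (R.sink H) := by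
  obtain ⟨h0, hh0⟩ := hH.1
  refine ⟨⟨⊤, ?_⟩, ?_, ?_⟩
  · apply Set.eq_univ_of_forall
    intro c
    refine ⟨c, ?_, h0, hh0, mul_le_left R c h0⟩
    · show c ⊔ ⊤ = ⊤; exact sup_top_eq c
  · intro a ha b hb
    apply Set.eq_univ_of_forall
    intro c
    have h1 : c ∈ R.FJoin (R.perp a) H := ha ▸ Set.mem_univ c
    have h2 : c ∈ R.FJoin (R.perp b) H := hb ▸ Set.mem_univ c
    obtain ⟨u, hu, g1, hg1, hle1⟩ := h1
    obtain ⟨v, hv, g2, hg2, hle2⟩ := h2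
    refine ⟨u ⊔ v, ?_, R.mul g1 g2, hH.2.1 g1 hg1 g2 hg2, ?_⟩
    · apply perp_inter R
      · show u ⊔ v ⊔ a = ⊤
        have : (⊤ : A) ≤ u ⊔ v ⊔ a := by
          rw [sup_right_comm]
          exact le_trans (le_of_eq hu.symm) le_sup_left
        exact le_antisymm le_top this
      · show u ⊔ v ⊔ b = ⊤
        have : (⊤ : A) ≤ u ⊔ v ⊔ b := by
          rw [sup_assoc]
          exact le_trans (le_of_eq hv.symm) le_sup_right
        exact le_antisymm le_top this
    · rw [R.mul_comm, mul_sup]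
      apply sup_le
      · calc R.mul (R.mul g1 g2) u ≤ R.mul g1 u :=
              mul_mono_left R u (mul_le_left R g1 g2)
          _ = R.mul u g1 := R.mul_comm _ _
          _ ≤ c := hle1
      · calc R.mul (R.mul g1 g2) v ≤ R.mul g2 v :=
              mul_mono_left R v (mul_le_right R g1 g2)
          _ = R.mul v g2 := R.mul_comm _ _
          _ ≤ c := hle2
  · intro a ha y
    apply Set.eq_univ_of_univ_subset
    rw [← ha]
    rintro c ⟨u, hu, g, hg, hle⟩
    exact ⟨u, perp_mono R le_sup_left hu, g, hg, hle⟩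

lemma pure_iff_subset_sink {F : Set A} : R.PureOn F ↔ F ⊆ R.sink F := Iff.rfl

lemma foldr_map_sup_le (a : A) (l : List A) :
    (l.map (fun x => a ⊔ x)).foldr R.mul ⊤ ≤ a ⊔ l.foldr R.mul ⊤ := by
  induction l with
  | nil => simp
  | cons x l ih =>
      simp only [List.map_cons, List.foldr_cons]
      calc R.mul (a ⊔ x) ((l.map (fun x => a ⊔ x)).foldr R.mul ⊤)
          ≤ R.mul (a ⊔ x) (a ⊔ l.foldr R.mul ⊤) := mul_mono_right R _ ih
        _ ≤ a ⊔ R.mul x (l.foldr R.mul ⊤) := sup_mul_sup R a x _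

end Aux

open Aux in
theorem stmt10 (R : ResiduatedLattice A) :
    (∀ 𝒻 : Set (Set A), (∀ G ∈ 𝒻, R.IsFilter G ∧ R.PureOn G) →
      R.PureOn (R.gen (⋃₀ 𝒻))) ∧
    (∀ F G : Set A, R.IsFilter F → R.PureOn F → R.IsFilter G → R.PureOn G →
      R.PureOn (F ∩ G)) ∧
    (∀ F : Set A, ∀ 𝒻 : Set (Set A), R.IsFilter F → R.PureOn F →
      (∀ G ∈ 𝒻, R.IsFilter G ∧ R.PureOn G) →
      F ∩ R.gen (⋃₀ 𝒻) = R.gen (⋃ G ∈ 𝒻, F ∩ G)) := by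
  refine ⟨?_, ?_, ?_⟩
  · -- join of pure filters is pure
    intro 𝒻 h𝒻
    set H := R.gen (⋃₀ 𝒻) with hH
    have hHfil : R.IsFilter H := gen_isFilter R _
    have hsink : R.IsFilter (R.sink H) := sink_isFilter R hHfil
    have hsub : ⋃₀ 𝒻 ⊆ R.sink H := by
      rintro a ⟨G, hG, haG⟩
      have hGpure := (h𝒻 G hG).2
      have hGH : G ⊆ H := fun x hx => subset_gen R _ ⟨G, hG, hx⟩
      exact sink_mono R hGH (hGpure a haG)
    intro a ha
    exact gen_subset R hsink hsub ha
  · -- intersection of two pure filters is pure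
    intro F G hF hFp hG hGp
    rintro a ⟨haF, haG⟩
    apply Set.eq_univ_of_forall
    intro c
    have h1 : c ∈ R.FJoin (R.perp a) F := hFp a haF ▸ Set.mem_univ c
    have h2 : c ∈ R.FJoin (R.perp a) G := hGp a haG ▸ Set.mem_univ c
    obtain ⟨u, hu, f, hf, hle1⟩ := h1
    obtain ⟨v, hv, g, hg, hle2⟩ := h2
    refine ⟨R.mul u v, perp_mul R hu hv, f ⊔ g, ⟨hF.2.2 f hf g, ?_⟩, ?_⟩
    · have := hG.2.2 g hg f
      rwa [sup_comm] at this
    · rw [Aux.mul_sup]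
      apply sup_le
      · calc R.mul (R.mul u v) f ≤ R.mul u f := mul_mono_left R f (mul_le_left R u v)
          _ ≤ c := hle1
      · calc R.mul (R.mul u v) g ≤ R.mul v g := mul_mono_left R g (mul_le_right R u v)
          _ ≤ c := hle2
  · -- distributivity
    intro F 𝒻 hF _ h𝒻
    apply Set.Subset.antisymm
    · rintro a ⟨haF, l, hl, hle⟩
      refine ⟨l.map (fun x => a ⊔ x), ?_, ?_⟩
      · intro x hx
        obtain ⟨y, hy, rfl⟩ := List.mem_map.mp hx
        obtain ⟨G, hG, hyG⟩ := hl y hy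
        refine Set.mem_biUnion hG ⟨hF.2.2 a haF y, ?_⟩
        have := ((h𝒻 G hG).1).2.2 y hyG a
        rwa [sup_comm] at this
      · calc (l.map (fun x => a ⊔ x)).foldr R.mul ⊤ ≤ a ⊔ l.foldr R.mul ⊤ :=
              foldr_map_sup_le R a l
          _ ≤ a := sup_le le_rfl hle
    · intro a ha
      constructor
      · refine gen_subset R hF ?_ ha
        rintro x hx
        obtain ⟨G, hG, hxF, _⟩ := Set.mem_iUnion₂.mp hx
        exact hxF
      · refine gen_mono R ?_ ha
        rintro x hx
        obtain ⟨G, hG, _, hxG⟩ := Set.mem_iUnion₂.mp hx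
        exact ⟨G, hG, hxG⟩
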